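/- The evaluation of the q-Stirling number of the second kind at q = −1, S_q[n,k]|_{q=−1}, equals the number of weakly increasing allowable RG-words of length n with maximum letter k. -/

import Mathlib

open scoped Classical
open Polynomial

/-- The prefix maximum `max(w_1, …, w_{i-1})` (equal to `0` when `i` is the first index). -/
def pmax {n k : ℕ} (w : Fin n → Fin (k + 1)) (i : Fin n) : ℕ :=
  (Finset.univ.filter fun j => j < i).sup fun j => (w j : ℕ)

/-- `w` is a restricted growth word of length `n` with maximum letter `k`. -/
def IsRG {n k : ℕ} (w : Fin n → Fin (k + 1)) : Prop :=
  (∀ i, 1 ≤ (w i : ℕ)) ∧ (∀ i, (w i : ℕ) ≤ pmax w i + 1) ∧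
    (Finset.univ.sup fun i => (w i : ℕ)) = k

/-- An RG-word is allowable if every even letter appears exactly once. -/
def IsAllowable {n k : ℕ} (w : Fin n → Fin (k + 1)) : Prop :=
  ∀ j : ℕ, Even j → (Finset.univ.filter fun i => (w i : ℕ) = j).card ≤ 1

/-- The `q`-Stirling numbers of the second kind. -/
noncomputable def qS : ℕ → ℕ → Polynomial ℤ
  | 0, 0 => 1
  | 0, _ + 1 => 0
  | _ + 1, 0 => 0
  | n + 1, k + 1 => qS n k + (∑ i ∈ Finset.range (k + 1), X ^ i) * qS n (k + 1)

open Finset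

lemma pmax_castSucc {n k k' : ℕ} (w : Fin (n+1) → Fin (k+1)) (v : Fin n → Fin (k'+1))
    (h : ∀ i : Fin n, (v i : ℕ) = (w i.castSucc : ℕ)) (i : Fin n) :
    pmax v i = pmax w i.castSucc := by
  unfold pmax
  apply le_antisymm
  · apply Finset.sup_le
    intro j hj
    simp only [Finset.mem_filter, Finset.mem_univ, true_and] at hj
    rw [h j]
    exact Finset.le_sup (f := fun j => ((w j : ℕ)))
      (by simp only [Finset.mem_filter, Finset.mem_univ, true_and]
          exact Fin.castSucc_lt_castSucc_iff.mpr hj)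
  · apply Finset.sup_le
    intro j hj
    simp only [Finset.mem_filter, Finset.mem_univ, true_and] at hj
    have h2 : (j : ℕ) < (i : ℕ) := by simpa [Fin.lt_def] using hj
    have hjn : j.val < n := h2.trans i.isLt
    have hje : j = Fin.castSucc ⟨j.val, hjn⟩ := rfl
    rw [hje, ← h ⟨j.val, hjn⟩]
    exact Finset.le_sup (f := fun j => ((v j : ℕ)))
      (by simp only [Finset.mem_filter, Finset.mem_univ, true_and, Fin.lt_def]; exact h2)

lemma pmax_last {n k : ℕ} (w : Fin (n+1) → Fin (k+1)) :
    pmax w (Fin.last n) = Finset.univ.sup (fun i : Fin n => (w i.castSucc : ℕ)) := by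
  unfold pmax
  apply le_antisymm
  · apply Finset.sup_le
    intro j hj
    simp only [Finset.mem_filter, Finset.mem_univ, true_and, Fin.lt_def, Fin.val_last] at hj
    have hje : j = Fin.castSucc ⟨j.val, hj⟩ := rfl
    rw [hje]
    exact Finset.le_sup (f := fun i : Fin n => ((w i.castSucc : ℕ))) (Finset.mem_univ _)
  · apply Finset.sup_le
    intro j _
    exact Finset.le_sup (f := fun j => ((w j : ℕ)))
      (by simp [Fin.lt_def, j.isLt])

lemma sup_univ_split {n k : ℕ} (w : Fin (n+1) → Fin (k+1)) :
    (Finset.univ.sup fun i => (w i : ℕ)) =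
      max (Finset.univ.sup fun i : Fin n => (w i.castSucc : ℕ)) (w (Fin.last n) : ℕ) := by
  rw [Fin.univ_castSuccEmb, Finset.sup_cons, Finset.sup_map]
  rw [max_comm]
  rfl

lemma last_val_eq {n k : ℕ} (w : Fin (n+1) → Fin (k+1)) (hm : Monotone w)
    (hs : (Finset.univ.sup fun i => (w i : ℕ)) = k) : (w (Fin.last n) : ℕ) = k := by
  refine le_antisymm (Nat.lt_succ_iff.mp (w (Fin.last n)).isLt) ?_
  calc k = Finset.univ.sup fun i => (w i : ℕ) := hs.symm
    _ ≤ (w (Fin.last n) : ℕ) := Finset.sup_le fun i _ => hm (Fin.le_last i)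

lemma good_restrict {n K K' : ℕ} (w : Fin (n+1) → Fin (K+1)) (v : Fin n → Fin (K'+1))
    (hcast : ∀ i : Fin n, (v i : ℕ) = (w i.castSucc : ℕ))
    (hsupv : (Finset.univ.sup fun i => (v i : ℕ)) = K')
    (hrg : IsRG w) (hal : IsAllowable w) (hmo : Monotone w) :
    IsRG v ∧ IsAllowable v ∧ Monotone v := by
  refine ⟨⟨fun i => by rw [hcast i]; exact hrg.1 _, fun i => ?_, hsupv⟩, fun j hj => ?_, ?_⟩
  · rw [hcast i, pmax_castSucc w v hcast i]
    exact hrg.2.1 _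
  · have hsub : (Finset.univ.filter fun i : Fin n => (v i : ℕ) = j).image Fin.castSucc ⊆
        Finset.univ.filter fun i : Fin (n+1) => (w i : ℕ) = j := by
      intro x hx
      simp only [Finset.mem_image, Finset.mem_filter, Finset.mem_univ, true_and] at hx ⊢
      obtain ⟨y, hy, rfl⟩ := hx
      rw [← hcast y]; exact hy
    calc (Finset.univ.filter fun i : Fin n => (v i : ℕ) = j).card
        = ((Finset.univ.filter fun i : Fin n => (v i : ℕ) = j).image Fin.castSucc).card :=
          (Finset.card_image_of_injective _ (Fin.castSucc_injective n)).symm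
      _ ≤ _ := Finset.card_le_card hsub
      _ ≤ 1 := hal j hj
  · intro a b hab
    have : (v a : ℕ) ≤ (v b : ℕ) := by
      rw [hcast a, hcast b]
      exact hmo (Fin.castSucc_le_castSucc_iff.mpr hab)
    exact this

lemma good_snoc {n K K' : ℕ} (v : Fin n → Fin (K'+1)) (w : Fin (n+1) → Fin (K+1))
    (hcast : ∀ i : Fin n, (w i.castSucc : ℕ) = (v i : ℕ))
    (hlast : (w (Fin.last n) : ℕ) = K)
    (hK1 : 1 ≤ K) (hK2 : K ≤ K' + 1) (hK3 : K' ≤ K)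
    (hEv : Even K → K = K' + 1)
    (hrg : IsRG v) (hal : IsAllowable v) (hmo : Monotone v) :
    IsRG w ∧ IsAllowable w ∧ Monotone w := by
  have hsupv : (Finset.univ.sup fun i => (v i : ℕ)) = K' := hrg.2.2
  have hsupcast : (Finset.univ.sup fun i : Fin n => (w i.castSucc : ℕ)) = K' := by
    rw [← hsupv]; exact Finset.sup_congr rfl fun i _ => hcast i
  have hvle : ∀ i : Fin n, (w i.castSucc : ℕ) ≤ K' := fun i => by
    have h1 := Finset.le_sup (f := fun i => ((v i : ℕ))) (Finset.mem_univ i)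
    rw [hsupv] at h1
    rw [hcast i]; exact h1
  refine ⟨⟨?_, ?_, ?_⟩, ?_, ?_⟩
  · intro i
    rcases Fin.eq_castSucc_or_eq_last i with ⟨i', rfl⟩ | rfl
    · rw [hcast i']; exact hrg.1 _
    · omega
  · intro i
    rcases Fin.eq_castSucc_or_eq_last i with ⟨i', rfl⟩ | rfl
    · rw [← pmax_castSucc w v (fun x => (hcast x).symm) i', hcast i']
      exact hrg.2.1 _
    · rw [pmax_last, hsupcast, hlast]; exact hK2
  · rw [sup_univ_split, hsupcast, hlast]; omega
  · intro j hj
    by_cases hjK : j = K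
    · have hjK' : Even K := hjK ▸ hj
      have heq : (Finset.univ.filter fun i : Fin (n+1) => (w i : ℕ) = K) = {Fin.last n} := by
        ext i
        simp only [Finset.mem_filter, Finset.mem_univ, true_and, Finset.mem_singleton]
        constructor
        · intro h
          rcases Fin.eq_castSucc_or_eq_last i with ⟨i', rfl⟩ | rfl
          · exfalso
            have := hvle i'
            have hKK : K = K' + 1 := hEv hjK'
            omega
          · rfl
        · intro h; subst h; exact hlast
      rw [hjK, heq]; simp
    · have : (Finset.univ.filter fun i : Fin (n+1) => (w i : ℕ) = j) =
          (Finset.univ.filter fun i : Fin n => (v i : ℕ) = j).image Fin.castSucc := by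
        ext i
        simp only [Finset.mem_filter, Finset.mem_univ, true_and, Finset.mem_image]
        constructor
        · intro h
          rcases Fin.eq_castSucc_or_eq_last i with ⟨i', rfl⟩ | rfl
          · exact ⟨i', by rw [← hcast i']; exact h, rfl⟩
          · exact absurd h (by rw [hlast]; exact fun h => hjK h.symm)
        · rintro ⟨y, hy, rfl⟩
          rw [hcast y]; exact hy
      rw [this, Finset.card_image_of_injective _ (Fin.castSucc_injective n)]
      exact hal j hj
  · intro a b hab
    rcases Fin.eq_castSucc_or_eq_last b with ⟨b', rfl⟩ | rfl
    · have hane : a ≠ Fin.last n := by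
        intro h; subst h
        exact absurd (lt_of_le_of_lt hab (Fin.castSucc_lt_last b')) (lt_irrefl _)
      obtain ⟨a', rfl⟩ := (Fin.eq_castSucc_or_eq_last a).resolve_right hane
      have : (v a' : ℕ) ≤ (v b' : ℕ) := hmo (by
        have := Fin.castSucc_le_castSucc_iff.mp hab; exact this)
      show (w a'.castSucc : ℕ) ≤ (w b'.castSucc : ℕ)
      rw [hcast a', hcast b']; exact this
    · show (w a : ℕ) ≤ (w (Fin.last n) : ℕ)
      rw [hlast]
      rcases Fin.eq_castSucc_or_eq_last a with ⟨a', rfl⟩ | rfl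
      · exact le_trans (hvle a') hK3
      · omega

noncomputable def N (n k : ℕ) : ℕ :=
  (Finset.univ.filter fun w : Fin n → Fin (k + 1) =>
    IsRG w ∧ IsAllowable w ∧ Monotone w).card

lemma N_zero_zero : N 0 0 = 1 := by
  rw [N]
  have : (Finset.univ.filter fun w : Fin 0 → Fin 1 =>
      IsRG w ∧ IsAllowable w ∧ Monotone w) = Finset.univ := by
    refine Finset.filter_true_of_mem fun w _ => ?_
    refine ⟨⟨fun i => i.elim0, fun i => i.elim0, by simp⟩, fun j hj => ?_, fun a b _ => a.elim0⟩
    · refine le_trans (Finset.card_le_card (Finset.filter_subset _ _)) ?_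
      simp
  rw [this]
  simp

lemma N_zero_succ (k : ℕ) : N 0 (k+1) = 0 := by
  rw [N, Finset.card_eq_zero, Finset.filter_eq_empty_iff]
  intro w _
  rintro ⟨⟨-, -, hs⟩, -, -⟩
  simp at hs

lemma N_succ_zero (n : ℕ) : N (n+1) 0 = 0 := by
  rw [N, Finset.card_eq_zero, Finset.filter_eq_empty_iff]
  intro w _
  rintro ⟨⟨h1, -, -⟩, -, -⟩
  have := h1 0
  have h0 : (w 0 : ℕ) < 1 := (w 0).isLt
  omega

lemma N_rec (n k : ℕ) :
    N (n+1) (k+1) = N n k + if Even k then N n (k+1) else 0 := by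
  classical
  set P : (Fin (n+1) → Fin (k+2)) → Prop :=
    fun w => IsRG w ∧ IsAllowable w ∧ Monotone w with hP
  set Q : (Fin (n+1) → Fin (k+2)) → Prop :=
    fun w => ∀ i : Fin n, (w i.castSucc : ℕ) ≤ k with hQ
  have hsplit : N (n+1) (k+1) =
      (Finset.univ.filter fun w => P w ∧ Q w).card +
      (Finset.univ.filter fun w => P w ∧ ¬ Q w).card := by
    have h0 := Finset.card_filter_add_card_filter_not
      (s := Finset.univ.filter P) (p := Q)
    rw [Finset.filter_filter, Finset.filter_filter] at h0
    rw [N]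
    exact h0.symm
  -- first summand = N n k
  have h1 : (Finset.univ.filter fun w => P w ∧ Q w).card = N n k := by
    rw [N]
    refine Finset.card_nbij'
      (fun w => fun x : Fin n => (⟨min ((w x.castSucc : ℕ)) k, by omega⟩ : Fin (k+1)))
      (fun v => Fin.snoc (fun x : Fin n => (⟨(v x : ℕ), by have := (v x).isLt; omega⟩ : Fin (k+2)))
        (⟨k+1, by omega⟩ : Fin (k+2)))
      ?_ ?_ ?_ ?_
    · intro w hw
      simp only [Finset.mem_coe, Finset.mem_filter, Finset.mem_univ, true_and] at hw ⊢
      obtain ⟨⟨hrg, hal, hmo⟩, hq⟩ := hw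
      have hcast : ∀ x : Fin n,
          ((⟨min ((w x.castSucc : ℕ)) k, by omega⟩ : Fin (k+1)) : ℕ) = (w x.castSucc : ℕ) := by
        intro x
        simp [min_eq_left (hq x)]
      refine good_restrict w _ hcast ?_ hrg hal hmo
      -- sup of restriction = k
      have hlastv : (w (Fin.last n) : ℕ) = k + 1 := last_val_eq w hmo hrg.2.2
      have hub : (Finset.univ.sup fun x : Fin n =>
          ((⟨min ((w x.castSucc : ℕ)) k, by omega⟩ : Fin (k+1)) : ℕ)) ≤ k :=
        Finset.sup_le fun x _ => by simp
      have hlb := hrg.2.1 (Fin.last n)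
      rw [pmax_last, hlastv] at hlb
      have hsupc : (Finset.univ.sup fun x : Fin n => (w x.castSucc : ℕ)) =
          (Finset.univ.sup fun x : Fin n =>
            ((⟨min ((w x.castSucc : ℕ)) k, by omega⟩ : Fin (k+1)) : ℕ)) :=
        Finset.sup_congr rfl fun x _ => (hcast x).symm
      omega
    · intro v hv
      simp only [Finset.mem_coe, Finset.mem_filter, Finset.mem_univ, true_and] at hv ⊢
      obtain ⟨hrg, hal, hmo⟩ := hv
      set g : Fin (n+1) → Fin (k+2) :=
        Fin.snoc (fun x : Fin n => (⟨(v x : ℕ), by have := (v x).isLt; omega⟩ : Fin (k+2)))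
          (⟨k+1, by omega⟩ : Fin (k+2)) with hg
      have hcast : ∀ x : Fin n, (g x.castSucc : ℕ) = (v x : ℕ) := by
        intro x
        rw [hg, Fin.snoc_castSucc]
      have hlast : (g (Fin.last n) : ℕ) = k + 1 := by
        rw [hg, Fin.snoc_last]
      constructor
      · exact good_snoc v _ hcast hlast (by omega) (by omega) (by omega) (fun _ => rfl)
          hrg hal hmo
      · intro x
        rw [hcast x]
        exact Nat.lt_succ_iff.mp (v x).isLt
    · intro w hw
      simp only [Finset.mem_coe, Finset.mem_filter, Finset.mem_univ, true_and] at hw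
      obtain ⟨⟨hrg, hal, hmo⟩, hq⟩ := hw
      have hlastv : (w (Fin.last n) : ℕ) = k + 1 := last_val_eq w hmo hrg.2.2
      funext i
      rcases Fin.eq_castSucc_or_eq_last i with ⟨i', rfl⟩ | rfl
      · refine Fin.ext ?_
        have hqi := hq i'
        simp only [Fin.snoc_castSucc]
        simpa using min_eq_left hqi
      · refine Fin.ext ?_
        simp only [Fin.snoc_last]
        simp [hlastv]
    · intro v hv
      funext x
      refine Fin.ext ?_
      have hle := Nat.lt_succ_iff.mp (v x).isLt
      simp only [Fin.snoc_castSucc]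
      simpa using min_eq_left hle
  -- second summand
  have h2 : (Finset.univ.filter fun w => P w ∧ ¬ Q w).card =
      if Even k then N n (k+1) else 0 := by
    split_ifs with hk
    · -- bijection with N n (k+1)
      rw [N]
      refine Finset.card_nbij'
        (fun w => fun x : Fin n => w x.castSucc)
        (fun v => Fin.snoc v (⟨k+1, by omega⟩ : Fin (k+2)))
        ?_ ?_ ?_ ?_
      · intro w hw
        simp only [Finset.mem_coe, Finset.mem_filter, Finset.mem_univ, true_and] at hw ⊢
        obtain ⟨⟨hrg, hal, hmo⟩, hq⟩ := hw
        refine good_restrict w _ (fun x => rfl) ?_ hrg hal hmo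
        simp only [hQ, not_forall, not_le] at hq
        obtain ⟨i0, hi0⟩ := hq
        have hub : (Finset.univ.sup fun x : Fin n => (w x.castSucc : ℕ)) ≤ k + 1 :=
          Finset.sup_le fun x _ => Nat.lt_succ_iff.mp (w x.castSucc).isLt
        have hlb : k + 1 ≤ (Finset.univ.sup fun x : Fin n => (w x.castSucc : ℕ)) := by
          have h3 : (w i0.castSucc : ℕ) ≤ Finset.univ.sup (fun x : Fin n => (w x.castSucc : ℕ)) :=
            Finset.le_sup (f := fun x : Fin n => ((w x.castSucc : ℕ))) (Finset.mem_univ i0)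
          omega
        omega
      · intro v hv
        simp only [Finset.mem_coe, Finset.mem_filter, Finset.mem_univ, true_and] at hv ⊢
        obtain ⟨hrg, hal, hmo⟩ := hv
        have hex : ∃ i0 : Fin n, (v i0 : ℕ) = k + 1 := by
          rcases Finset.univ.eq_empty_or_nonempty (α := Fin n) with he | hne
          · exfalso
            have := hrg.2.2
            rw [he] at this
            simp at this
          · obtain ⟨i0, -, hi0⟩ := Finset.exists_mem_eq_sup Finset.univ hne
              (fun x : Fin n => ((v x : ℕ)))
            exact ⟨i0, by rw [← hi0]; exact hrg.2.2⟩
        obtain ⟨i0, hi0⟩ := hex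
        constructor
        · refine good_snoc v _ (fun x => by rw [Fin.snoc_castSucc]) (by rw [Fin.snoc_last])
            (by omega) (by omega) (by omega) ?_ hrg hal hmo
          intro hev
          exfalso
          rw [Nat.even_add_one] at hev
          exact hev hk
        · intro hq
          have := hq i0
          rw [Fin.snoc_castSucc, hi0] at this
          omega
      · intro w hw
        simp only [Finset.mem_coe, Finset.mem_filter, Finset.mem_univ, true_and] at hw
        obtain ⟨⟨hrg, hal, hmo⟩, hq⟩ := hw
        have hlastv : (w (Fin.last n) : ℕ) = k + 1 := last_val_eq w hmo hrg.2.2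
        funext i
        rcases Fin.eq_castSucc_or_eq_last i with ⟨i', rfl⟩ | rfl
        · simp only [Fin.snoc_castSucc]
        · simp only [Fin.snoc_last]
          exact Fin.ext (by simp [hlastv])
      · intro v hv
        funext x
        simp only [Fin.snoc_castSucc]
    · -- k odd: set is empty
      rw [Finset.card_eq_zero, Finset.filter_eq_empty_iff]
      intro w _
      rintro ⟨⟨hrg, hal, hmo⟩, hq⟩
      simp only [hQ, not_forall, not_le] at hq
      obtain ⟨i0, hi0⟩ := hq
      have hlastv : (w (Fin.last n) : ℕ) = k + 1 := last_val_eq w hmo hrg.2.2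
      have hi0v : (w i0.castSucc : ℕ) = k + 1 := by
        have := Nat.lt_succ_iff.mp (w i0.castSucc).isLt
        omega
      have hev : Even (k+1) := Nat.even_add_one.mpr hk
      have hcard := hal (k+1) hev
      have hsub : ({i0.castSucc, Fin.last n} : Finset (Fin (n+1))) ⊆
          Finset.univ.filter fun i => (w i : ℕ) = k + 1 := by
        intro x hx
        simp only [Finset.mem_insert, Finset.mem_singleton] at hx
        rcases hx with rfl | rfl <;>
          simp only [Finset.mem_filter, Finset.mem_univ, true_and]
        · exact hi0v
        · exact hlastv
      have hne : i0.castSucc ≠ Fin.last n := Fin.ne_of_lt (Fin.castSucc_lt_last i0)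
      have h2le := Finset.card_le_card hsub
      rw [Finset.card_pair hne] at h2le
      omega
  rw [hsplit, h1, h2]

theorem main (n k : ℕ) : (qS n k).eval (-1) = (N n k : ℤ) := by
  induction n generalizing k with
  | zero =>
    cases k with
    | zero => simp [qS, N_zero_zero]
    | succ k => simp [qS, N_zero_succ]
  | succ n ih =>
    cases k with
    | zero => simp [qS, N_succ_zero]
    | succ k =>
      have hq : qS (n+1) (k+1) = qS n k + (∑ i ∈ Finset.range (k + 1), X ^ i) * qS n (k + 1) := by
        rw [qS]
      rw [hq, Polynomial.eval_add, Polynomial.eval_mul, ih k, ih (k+1), N_rec]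
      have hg : (∑ i ∈ Finset.range (k + 1), (X : Polynomial ℤ) ^ i).eval (-1) =
          if Even k then 1 else 0 := by
        rw [Polynomial.eval_finset_sum]
        simp only [Polynomial.eval_pow, Polynomial.eval_X]
        rw [neg_one_geom_sum]
        rcases Nat.even_or_odd k with h | h
        · simp [h, Nat.even_add_one, Nat.not_even_iff_odd, Nat.not_odd_iff_even.mpr h]
        · simp [Nat.even_add_one, Nat.not_even_iff_odd, h, Nat.not_even_iff_odd.mpr h]
      rw [hg]
      split_ifs with h <;> push_cast <;> ring

theorem qS_eval_neg_one (n k : ℕ) :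
    (qS n k).eval (-1) =
      ((Finset.univ.filter fun w : Fin n → Fin (k + 1) =>
        IsRG w ∧ IsAllowable w ∧ Monotone w).card : ℤ) := by
  exact main n k
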